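/- If K is a path-connected subset of ℝⁿ that is topologically homogeneous (for any x, y ∈ K there are open neighborhoods U_x, U_y in ℝⁿ and a homeomorphism φ : U_x → U_y with φ(x) = y and φ(U_x ∩ K) = U_y ∩ K) and K contains a subset homeomorphic to a simple triod with branch point x₀, then every point of K is the branch point of a simple triod contained in K. -/

import Mathlib

open Set

/-- The model simple triod in the plane: three segments sharing exactly the
common endpoint `0` (the cone over three points); `0` is its branch point. -/
def TriodSet : Set (ℝ × ℝ) :=
  segment ℝ (0, 0) (1, 0) ∪ segment ℝ (0, 0) (0, 1) ∪ segment ℝ (0, 0) (-1, 0)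

lemma zero_mem_TriodSet : ((0, 0) : ℝ × ℝ) ∈ TriodSet :=
  Or.inl (Or.inl (left_mem_segment ℝ _ _))

/-- `T` is a simple triod in `E` with branch point `p`: `T` is a homeomorphic
copy of the model triod with the cone point sent to `p` (a continuous injection
of the compact model with range `T` is automatically an embedding). -/
def IsTriodAt {E : Type*} [TopologicalSpace E] (T : Set E) (p : E) : Prop :=
  ∃ e : TriodSet → E, Continuous e ∧ Function.Injective e ∧
    Set.range e = T ∧ e ⟨(0, 0), zero_mem_TriodSet⟩ = p

/-- Topological homogeneity of `K ⊆ E`: any two points of `K` are exchanged by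
a homeomorphism between ambient open neighborhoods preserving `K`. -/
def TopHomogeneous {E : Type*} [TopologicalSpace E] (K : Set E) : Prop :=
  ∀ x ∈ K, ∀ y ∈ K, ∃ (Ux Uy : Set E) (φ ψ : E → E),
    IsOpen Ux ∧ IsOpen Uy ∧ x ∈ Ux ∧ y ∈ Uy ∧
    ContinuousOn φ Ux ∧ ContinuousOn ψ Uy ∧ Set.BijOn φ Ux Uy ∧
    Set.InvOn ψ φ Ux Uy ∧ φ x = y ∧ φ '' (Ux ∩ K) = Uy ∩ K

lemma segment_zero_eq (a : ℝ × ℝ) :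
    segment ℝ ((0, 0) : ℝ × ℝ) a = (fun θ : ℝ => θ • a) '' Icc 0 1 := by
  have : ((0, 0) : ℝ × ℝ) = 0 := rfl
  rw [this, segment_eq_image]
  simp

lemma TriodSet.smul_mem {ε : ℝ} (hε0 : 0 ≤ ε) (hε1 : ε ≤ 1) {x : ℝ × ℝ}
    (hx : x ∈ TriodSet) : ε • x ∈ TriodSet := by
  have key : ∀ a : ℝ × ℝ, x ∈ segment ℝ ((0, 0) : ℝ × ℝ) a →
      ε • x ∈ segment ℝ ((0, 0) : ℝ × ℝ) a := by
    intro a hxa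
    rw [segment_zero_eq] at hxa ⊢
    obtain ⟨θ, hθ, rfl⟩ := hxa
    refine ⟨ε * θ, ⟨mul_nonneg hε0 hθ.1, ?_⟩, mul_smul ε θ a⟩
    nlinarith [hθ.1, hθ.2]
  rcases hx with (h | h) | h
  · exact Or.inl (Or.inl (key _ h))
  · exact Or.inl (Or.inr (key _ h))
  · exact Or.inr (key _ h)

lemma TriodSet.norm_le_one {x : ℝ × ℝ} (hx : x ∈ TriodSet) : ‖x‖ ≤ 1 := by
  have key : ∀ a : ℝ × ℝ, ‖a‖ ≤ 1 → x ∈ segment ℝ ((0, 0) : ℝ × ℝ) a → ‖x‖ ≤ 1 := by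
    intro a ha hxa
    rw [segment_zero_eq] at hxa
    obtain ⟨θ, hθ, rfl⟩ := hxa
    rw [norm_smul, Real.norm_eq_abs, abs_of_nonneg hθ.1]
    calc θ * ‖a‖ ≤ 1 * 1 :=
          mul_le_mul hθ.2 ha (norm_nonneg _) zero_le_one
      _ = 1 := mul_one 1
  have h1 : ‖((1 : ℝ), (0 : ℝ))‖ ≤ 1 := by simp [Prod.norm_def]
  have h2 : ‖((0 : ℝ), (1 : ℝ))‖ ≤ 1 := by simp [Prod.norm_def]
  have h3 : ‖((-1 : ℝ), (0 : ℝ))‖ ≤ 1 := by simp [Prod.norm_def]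
  rcases hx with (h | h) | h
  · exact key _ h1 h
  · exact key _ h2 h
  · exact key _ h3 h

/-- a path-connected topologically homogeneous subset of ℝⁿ that
contains a simple triod has a simple triod branched at each of its points. -/
theorem triod_at_every_point {n : ℕ} (K : Set (EuclideanSpace ℝ (Fin n)))
    (hpc : IsPathConnected K) (hhom : TopHomogeneous K)
    (x₀ : EuclideanSpace ℝ (Fin n)) (hx₀ : x₀ ∈ K)
    (hT : ∃ T ⊆ K, IsTriodAt T x₀) :
    ∀ y ∈ K, ∃ T ⊆ K, IsTriodAt T y := by
  intro y hy
  obtain ⟨T, hTK, e, he_cont, he_inj, he_range, he_zero⟩ := hT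
  obtain ⟨Ux, Uy, φ, ψ, hUx, hUy, hxUx, hyUy, hφc, hψc, hbij, hinv, hφx, hφK⟩ :=
    hhom x₀ hx₀ y hy
  set p0 : TriodSet := ⟨(0, 0), zero_mem_TriodSet⟩ with hp0
  -- the preimage of Ux is open in the model triod, containing the branch point
  have hV : IsOpen (e ⁻¹' Ux) := hUx.preimage he_cont
  have hp0V : p0 ∈ e ⁻¹' Ux := by
    simp only [mem_preimage, he_zero]; exact hxUx
  obtain ⟨δ, hδpos, hδ⟩ := Metric.isOpen_iff.mp hV p0 hp0V
  set ε : ℝ := min (δ / 2) 1 with hε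
  have hε0 : 0 < ε := lt_min (by linarith) one_pos
  have hε1 : ε ≤ 1 := min_le_right _ _
  have hεδ : ε < δ := lt_of_le_of_lt (min_le_left _ _) (by linarith)
  -- shrinking map of the model triod
  set s : TriodSet → TriodSet :=
    fun t => ⟨ε • (t : ℝ × ℝ), TriodSet.smul_mem hε0.le hε1 t.2⟩ with hs
  have hmem : ∀ t, e (s t) ∈ Ux := by
    intro t
    apply hδ
    have hdist : dist (s t) p0 = ‖ε • (t : ℝ × ℝ)‖ := by
      rw [Subtype.dist_eq]
      show dist (ε • (t : ℝ × ℝ)) (0 : ℝ × ℝ) = _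
      rw [dist_zero_right]
    rw [Metric.mem_ball, hdist, norm_smul, Real.norm_eq_abs, abs_of_pos hε0]
    calc ε * ‖(t : ℝ × ℝ)‖ ≤ ε * 1 :=
          mul_le_mul_of_nonneg_left (TriodSet.norm_le_one t.2) hε0.le
      _ = ε := mul_one ε
      _ < δ := hεδ
  refine ⟨range (fun t => φ (e (s t))), ?_, fun t => φ (e (s t)), ?_, ?_, rfl, ?_⟩
  · -- range ⊆ K
    rintro _ ⟨t, rfl⟩
    have h1 : e (s t) ∈ Ux ∩ K := ⟨hmem t, hTK (he_range ▸ mem_range_self _)⟩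
    have h2 : φ (e (s t)) ∈ φ '' (Ux ∩ K) := mem_image_of_mem φ h1
    rw [hφK] at h2
    exact h2.2
  · -- continuity
    have hscont : Continuous s :=
      Continuous.subtype_mk (continuous_subtype_val.const_smul ε) _
    exact hφc.comp_continuous (he_cont.comp hscont) hmem
  · -- injectivity
    intro t₁ t₂ h
    have h1 : e (s t₁) = e (s t₂) := hbij.injOn (hmem t₁) (hmem t₂) h
    have h2 : s t₁ = s t₂ := he_inj h1
    have h3 : ε • (t₁ : ℝ × ℝ) = ε • (t₂ : ℝ × ℝ) := congrArg Subtype.val h2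
    have h4 : (t₁ : ℝ × ℝ) = (t₂ : ℝ × ℝ) := smul_right_injective (ℝ × ℝ) hε0.ne' h3
    exact Subtype.ext h4
  · -- branch point goes to y
    have hsp0 : s p0 = p0 := Subtype.ext (by show ε • ((0, 0) : ℝ × ℝ) = (0, 0); simp)
    show φ (e (s p0)) = y
    rw [hsp0, he_zero, hφx]
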